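/- arXiv:2210.05994 — 2 statements merged into one kernel-verified Lean document; each statement's English description precedes it below -/
import Mathlib

section
/- Let n ≥ 1 and let F_1, …, F_n : ℝ^d → ℝ^d be operators with average F = (1/n)∑_{i=1}^n F_i. Suppose each F_i is ℓ-cocoercive and F is μ-strongly monotone. Take the stepsize γ = 2/(9ℓ) and any natural number K with K ≥ 10ℓ/μ. Then the SARAH inner-loop trajectory satisfies 𝔼[‖F(z^K)‖²] ≤ (1/2) · ‖F(z⁰)‖². -/
open Finset

noncomputable section

/-- An operator `G : ℝ^d → ℝ^d` is `ℓ`-cocoercive: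
`‖G(u) - G(v)‖² ≤ ℓ ⟨G(u) - G(v), u - v⟩` for all `u, v`. -/
def Cocoercive {d : ℕ} (ℓ : ℝ)
    (G : EuclideanSpace ℝ (Fin d) → EuclideanSpace ℝ (Fin d)) : Prop :=
  ∀ u v : EuclideanSpace ℝ (Fin d),
    ‖G u - G v‖ ^ 2 ≤ ℓ * (inner ℝ (G u - G v) (u - v) : ℝ)

/-- An operator `G : ℝ^d → ℝ^d` is `μ`-strongly monotone:
`⟨G(u) - G(v), u - v⟩ ≥ μ ‖u - v‖²` for all `u, v`. -/
def StronglyMonotone {d : ℕ} (μ : ℝ)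
    (G : EuclideanSpace ℝ (Fin d) → EuclideanSpace ℝ (Fin d)) : Prop :=
  ∀ u v : EuclideanSpace ℝ (Fin d),
    μ * ‖u - v‖ ^ 2 ≤ (inner ℝ (G u - G v) (u - v) : ℝ)

/-- The average operator `F = (1/n) ∑_{i=1}^n F_i`. -/
def opAvg {d n : ℕ} (F : Fin n → EuclideanSpace ℝ (Fin d) → EuclideanSpace ℝ (Fin d)) :
    EuclideanSpace ℝ (Fin d) → EuclideanSpace ℝ (Fin d) :=
  fun z => (n : ℝ)⁻¹ • ∑ i, F i z

/-- One step of the SARAH recursion: from `(z, v)` and index `i`, go to `(z', v')`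
with `z' = z - γ v` and `v' = F_i(z') - F_i(z) + v`. -/
def sarahStep {d n : ℕ} (γ : ℝ)
    (F : Fin n → EuclideanSpace ℝ (Fin d) → EuclideanSpace ℝ (Fin d)) (i : Fin n)
    (p : EuclideanSpace ℝ (Fin d) × EuclideanSpace ℝ (Fin d)) :
    EuclideanSpace ℝ (Fin d) × EuclideanSpace ℝ (Fin d) :=
  (p.1 - γ • p.2, F i (p.1 - γ • p.2) - F i p.1 + p.2)

/-- Run SARAH steps along a list of indices. -/
def sarahRun {d n : ℕ} (γ : ℝ)
    (F : Fin n → EuclideanSpace ℝ (Fin d) → EuclideanSpace ℝ (Fin d)) :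
    EuclideanSpace ℝ (Fin d) × EuclideanSpace ℝ (Fin d) → List (Fin n) →
      EuclideanSpace ℝ (Fin d) × EuclideanSpace ℝ (Fin d)
  | p, [] => p
  | p, i :: l => sarahRun γ F (sarahStep γ F i p) l

/-- The SARAH inner-loop trajectory `(z^k, v^k)` started at `z^0 = z0` with
`v^0 = F(z^0)`, for the index sequence `j : Fin K → Fin n` (so `i_k = j (k-1)`):
`sarahTraj γ F z0 j k = (z^k, v^k)` is obtained by performing the SARAH steps
with the first `k` indices `i_1, …, i_k`. -/
def sarahTraj {d n K : ℕ} (γ : ℝ)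
    (F : Fin n → EuclideanSpace ℝ (Fin d) → EuclideanSpace ℝ (Fin d))
    (z0 : EuclideanSpace ℝ (Fin d)) (j : Fin K → Fin n) (k : ℕ) :
    EuclideanSpace ℝ (Fin d) × EuclideanSpace ℝ (Fin d) :=
  sarahRun γ F (z0, opAvg F z0) ((List.ofFn j).take k)


section SarahAux

variable {d n : ℕ}

private lemma sarahRun_append (γ : ℝ)
    (F : Fin n → EuclideanSpace ℝ (Fin d) → EuclideanSpace ℝ (Fin d))
    (l₁ l₂ : List (Fin n))
    (p : EuclideanSpace ℝ (Fin d) × EuclideanSpace ℝ (Fin d)) :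
    sarahRun γ F p (l₁ ++ l₂) = sarahRun γ F (sarahRun γ F p l₁) l₂ := by
  induction l₁ generalizing p with
  | nil => rfl
  | cons a l ih => simp only [List.cons_append, sarahRun]; exact ih _

private lemma sum_snoc_eq {K : ℕ} (g : (Fin (K+1) → Fin n) → ℝ) :
    ∑ j : Fin (K+1) → Fin n, g j
      = ∑ j : Fin K → Fin n, ∑ i : Fin n, g (Fin.snoc j i) := by
  have h := Fintype.sum_equiv
    (⟨fun p => Fin.snoc p.1 p.2, fun j => (Fin.init j, j (Fin.last K)),
      fun p => by simp, fun j => by simp⟩ :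
        ((Fin K → Fin n) × Fin n) ≃ (Fin (K+1) → Fin n))
    (fun p : (Fin K → Fin n) × Fin n => g (Fin.snoc p.1 p.2)) g (fun p => rfl)
  rw [← h, Fintype.sum_prod_type]

private lemma step_core {ℓ μ : ℝ} (hℓ : 0 < ℓ) (hμ : 0 < μ)
    (F : Fin n → EuclideanSpace ℝ (Fin d) → EuclideanSpace ℝ (Fin d))
    (hco : ∀ i, Cocoercive ℓ (F i)) (hsm : StronglyMonotone μ (opAvg F))
    (hn : 1 ≤ n) {γ : ℝ} (hγ0 : 0 < γ) (hγℓ : γ * ℓ = 2/9)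
    (p : EuclideanSpace ℝ (Fin d) × EuclideanSpace ℝ (Fin d)) :
    (∑ i, ‖(sarahStep γ F i p).2‖ ^ 2
        ≤ n * (1 - 16/9 * (μ * γ)) * ‖p.2‖ ^ 2) ∧
    (∑ i, ‖opAvg F (sarahStep γ F i p).1 - (sarahStep γ F i p).2‖ ^ 2
        ≤ n * ‖opAvg F p.1 - p.2‖ ^ 2
          + 1/8 * (n * ‖p.2‖ ^ 2 - ∑ i, ‖(sarahStep γ F i p).2‖ ^ 2)) := by
  obtain ⟨z, v⟩ := p
  have hn0 : (0:ℝ) < n := by exact_mod_cast Nat.lt_of_lt_of_le Nat.zero_lt_one hn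
  set z' := z - γ • v with hz'
  set w : Fin n → EuclideanSpace ℝ (Fin d) := fun i => F i z' - F i z with hwdef
  set wb := opAvg F z' - opAvg F z with hwbdef
  have hwb : (n : ℝ) • wb = ∑ i, w i := by
    rw [hwbdef]
    simp only [opAvg]
    rw [smul_sub, smul_inv_smul₀ (ne_of_gt hn0), smul_inv_smul₀ (ne_of_gt hn0),
      ← Finset.sum_sub_distrib]
  have hzz : z' - z = -(γ • v) := by rw [hz']; abel
  set t : ℝ := inner ℝ wb v with htdef
  have hsum_wv : ∑ i, (inner ℝ (w i) v : ℝ) = n * t := by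
    rw [← sum_inner, ← hwb, real_inner_smul_left]
  have hS : ∑ i, ‖w i‖ ^ 2 ≤ -(n * (γ * ℓ) * t) := by
    calc ∑ i, ‖w i‖ ^ 2 ≤ ∑ i, ℓ * (inner ℝ (w i) (z' - z) : ℝ) :=
          Finset.sum_le_sum fun i _ => hco i z' z
      _ = ℓ * (inner ℝ (∑ i, w i) (z' - z) : ℝ) := by rw [← Finset.mul_sum, ← sum_inner]
      _ = -(n * (γ * ℓ) * t) := by
          rw [← hwb, hzz, real_inner_smul_left, inner_neg_right, real_inner_smul_right]
          ring
  have ht : t ≤ -(μ * γ * ‖v‖ ^ 2) := by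
    have h := hsm z' z
    rw [← hwbdef, hzz, inner_neg_right, real_inner_smul_right, norm_neg, norm_smul,
      Real.norm_eq_abs, abs_of_pos hγ0, mul_pow] at h
    nlinarith [h, hγ0]
  have hstep2 : ∀ i, (sarahStep γ F i (z, v)).2 = w i + v := fun i => rfl
  have e : ∑ i, ‖(sarahStep γ F i (z, v)).2‖ ^ 2 = ∑ i, ‖w i + v‖ ^ 2 := rfl
  have hexp : ∑ i, ‖w i + v‖ ^ 2
      = (∑ i, ‖w i‖ ^ 2) + 2 * ((n:ℝ) * t) + n * ‖v‖ ^ 2 := by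
    have h1 : ∑ i, ‖w i + v‖ ^ 2
        = ∑ i, (‖w i‖ ^ 2 + 2 * (inner ℝ (w i) v : ℝ) + ‖v‖ ^ 2) :=
      Finset.sum_congr rfl fun i _ => norm_add_sq_real _ _
    rw [h1, Finset.sum_add_distrib, Finset.sum_add_distrib, ← Finset.mul_sum, hsum_wv,
      Finset.sum_const, card_univ, Fintype.card_fin, nsmul_eq_mul]
  have hSγ : ∑ i, ‖w i‖ ^ 2 ≤ -((n:ℝ) * (2/9) * t) := by rw [← hγℓ]; exact hS
  constructor
  · rw [e, hexp]
    have h2 : (16/9) * (n:ℝ) * t ≤ (16/9) * (n:ℝ) * (-(μ * γ * ‖v‖ ^ 2)) :=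
      mul_le_mul_of_nonneg_left ht (by positivity)
    nlinarith [hSγ, h2]
  · have e1 : ∀ i, opAvg F (sarahStep γ F i (z, v)).1 - (sarahStep γ F i (z, v)).2
        = (opAvg F z - v) + (wb - w i) := by
      intro i
      show opAvg F z' - (w i + v) = (opAvg F z - v) + (wb - w i)
      rw [hwbdef]; abel
    have hsum_e : ∑ i, (wb - w i) = 0 := by
      rw [Finset.sum_sub_distrib, ← hwb, Finset.sum_const, card_univ, Fintype.card_fin,
        ← Nat.cast_smul_eq_nsmul ℝ, sub_self]
    have hsum_inner_wb : ∑ i, (inner ℝ wb (w i) : ℝ) = n * ‖wb‖ ^ 2 := by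
      rw [← inner_sum, ← hwb, real_inner_smul_right, real_inner_self_eq_norm_sq]
    have hsum_e2 : ∑ i, ‖wb - w i‖ ^ 2 ≤ ∑ i, ‖w i‖ ^ 2 := by
      have h1 : ∑ i, ‖wb - w i‖ ^ 2
          = ∑ i, (‖wb‖ ^ 2 - 2 * (inner ℝ wb (w i) : ℝ) + ‖w i‖ ^ 2) :=
        Finset.sum_congr rfl fun i _ => norm_sub_sq_real _ _
      rw [h1, Finset.sum_add_distrib, Finset.sum_sub_distrib, ← Finset.mul_sum,
        hsum_inner_wb, Finset.sum_const, card_univ, Fintype.card_fin, nsmul_eq_mul]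
      have h0 : 0 ≤ (n:ℝ) * ‖wb‖ ^ 2 := by positivity
      linarith
    have e2 : ∑ i, ‖opAvg F (sarahStep γ F i (z, v)).1 - (sarahStep γ F i (z, v)).2‖ ^ 2
        = ∑ i, ‖(opAvg F z - v) + (wb - w i)‖ ^ 2 :=
      Finset.sum_congr rfl fun i _ => by rw [e1 i]
    have hexp2 : ∑ i, ‖(opAvg F z - v) + (wb - w i)‖ ^ 2
        = (n:ℝ) * ‖opAvg F z - v‖ ^ 2 + ∑ i, ‖wb - w i‖ ^ 2 := by
      have h1 : ∑ i, ‖(opAvg F z - v) + (wb - w i)‖ ^ 2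
          = ∑ i, (‖opAvg F z - v‖ ^ 2 + 2 * (inner ℝ (opAvg F z - v) (wb - w i) : ℝ)
              + ‖wb - w i‖ ^ 2) :=
        Finset.sum_congr rfl fun i _ => norm_add_sq_real _ _
      rw [h1, Finset.sum_add_distrib, Finset.sum_add_distrib, ← Finset.mul_sum,
        ← inner_sum, hsum_e, inner_zero_right, Finset.sum_const, card_univ,
        Fintype.card_fin, nsmul_eq_mul]
      ring
    rw [e2, hexp2, e, hexp]
    have hSc : ∑ i, ‖w i‖ ^ 2
        ≤ 1/8 * ((n:ℝ) * ‖v‖ ^ 2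
            - ((∑ i, ‖w i‖ ^ 2) + 2 * ((n:ℝ) * t) + n * ‖v‖ ^ 2)) := by
      linarith [hSγ]
    linarith [hsum_e2, hSc]

private lemma sarah_main {ℓ μ : ℝ} (hℓ : 0 < ℓ) (hμ : 0 < μ)
    (F : Fin n → EuclideanSpace ℝ (Fin d) → EuclideanSpace ℝ (Fin d))
    (hco : ∀ i, Cocoercive ℓ (F i)) (hsm : StronglyMonotone μ (opAvg F))
    (hn : 1 ≤ n) {γ : ℝ} (hγ0 : 0 < γ) (hγℓ : γ * ℓ = 2/9)
    (hq : 0 ≤ 1 - 16/9 * (μ * γ)) (z0 : EuclideanSpace ℝ (Fin d)) (K : ℕ) :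
    (∑ j : Fin K → Fin n, ‖(sarahRun γ F (z0, opAvg F z0) (List.ofFn j)).2‖ ^ 2
       ≤ ((n:ℝ) * (1 - 16/9 * (μ * γ)))^K * ‖opAvg F z0‖ ^ 2) ∧
    (8 * (∑ j : Fin K → Fin n,
         ‖opAvg F (sarahRun γ F (z0, opAvg F z0) (List.ofFn j)).1
            - (sarahRun γ F (z0, opAvg F z0) (List.ofFn j)).2‖ ^ 2)
       + ∑ j : Fin K → Fin n, ‖(sarahRun γ F (z0, opAvg F z0) (List.ofFn j)).2‖ ^ 2
       ≤ (n:ℝ)^K * ‖opAvg F z0‖ ^ 2) := by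
  have hn0 : (0:ℝ) ≤ n := Nat.cast_nonneg n
  induction K with
  | zero =>
    have hbase : ∀ j : Fin 0 → Fin n,
        sarahRun γ F (z0, opAvg F z0) (List.ofFn j) = (z0, opAvg F z0) :=
      fun j => by rw [List.ofFn_zero]; rfl
    constructor
    · simp [hbase, sarahRun]
    · simp [hbase, sarahRun]
  | succ K ih =>
    obtain ⟨ih1, ih2⟩ := ih
    have hkey : ∀ g : (EuclideanSpace ℝ (Fin d) × EuclideanSpace ℝ (Fin d)) → ℝ,
        ∑ j : Fin (K+1) → Fin n, g (sarahRun γ F (z0, opAvg F z0) (List.ofFn j))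
          = ∑ j : Fin K → Fin n, ∑ i : Fin n,
              g (sarahStep γ F i (sarahRun γ F (z0, opAvg F z0) (List.ofFn j))) := by
      intro g
      rw [sum_snoc_eq]
      refine Finset.sum_congr rfl fun j _ => Finset.sum_congr rfl fun i _ => ?_
      congr 1
      rw [List.ofFn_succ', List.concat_eq_append]
      simp only [Fin.snoc_castSucc, Fin.snoc_last]
      rw [sarahRun_append]
      rfl
    constructor
    · rw [hkey (fun p => ‖p.2‖ ^ 2)]
      calc ∑ j : Fin K → Fin n, ∑ i : Fin n,
            ‖(sarahStep γ F i (sarahRun γ F (z0, opAvg F z0) (List.ofFn j))).2‖ ^ 2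
          ≤ ∑ j : Fin K → Fin n, (n:ℝ) * (1 - 16/9 * (μ * γ))
              * ‖(sarahRun γ F (z0, opAvg F z0) (List.ofFn j)).2‖ ^ 2 :=
            Finset.sum_le_sum fun j _ =>
              (step_core hℓ hμ F hco hsm hn hγ0 hγℓ _).1
        _ = (n:ℝ) * (1 - 16/9 * (μ * γ))
              * ∑ j : Fin K → Fin n,
                  ‖(sarahRun γ F (z0, opAvg F z0) (List.ofFn j)).2‖ ^ 2 := by
            rw [Finset.mul_sum]
        _ ≤ (n:ℝ) * (1 - 16/9 * (μ * γ))
              * (((n:ℝ) * (1 - 16/9 * (μ * γ)))^K * ‖opAvg F z0‖ ^ 2) :=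
            mul_le_mul_of_nonneg_left ih1 (mul_nonneg hn0 hq)
        _ = ((n:ℝ) * (1 - 16/9 * (μ * γ)))^(K+1) * ‖opAvg F z0‖ ^ 2 := by ring
    · rw [hkey (fun p => ‖opAvg F p.1 - p.2‖ ^ 2), hkey (fun p => ‖p.2‖ ^ 2),
        Finset.mul_sum, ← Finset.sum_add_distrib]
      calc ∑ j : Fin K → Fin n,
            (8 * ∑ i : Fin n,
              ‖opAvg F (sarahStep γ F i (sarahRun γ F (z0, opAvg F z0) (List.ofFn j))).1
                - (sarahStep γ F i (sarahRun γ F (z0, opAvg F z0) (List.ofFn j))).2‖ ^ 2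
             + ∑ i : Fin n,
              ‖(sarahStep γ F i (sarahRun γ F (z0, opAvg F z0) (List.ofFn j))).2‖ ^ 2)
          ≤ ∑ j : Fin K → Fin n, (n:ℝ)
              * (8 * ‖opAvg F (sarahRun γ F (z0, opAvg F z0) (List.ofFn j)).1
                    - (sarahRun γ F (z0, opAvg F z0) (List.ofFn j)).2‖ ^ 2
                 + ‖(sarahRun γ F (z0, opAvg F z0) (List.ofFn j)).2‖ ^ 2) := by
            refine Finset.sum_le_sum fun j _ => ?_
            have h := (step_core hℓ hμ F hco hsm hn hγ0 hγℓ
              (sarahRun γ F (z0, opAvg F z0) (List.ofFn j))).2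
            linarith
        _ = (n:ℝ) * ∑ j : Fin K → Fin n,
              (8 * ‖opAvg F (sarahRun γ F (z0, opAvg F z0) (List.ofFn j)).1
                  - (sarahRun γ F (z0, opAvg F z0) (List.ofFn j)).2‖ ^ 2
               + ‖(sarahRun γ F (z0, opAvg F z0) (List.ofFn j)).2‖ ^ 2) := by
            rw [Finset.mul_sum]
        _ ≤ (n:ℝ) * ((n:ℝ)^K * ‖opAvg F z0‖ ^ 2) := by
            refine mul_le_mul_of_nonneg_left ?_ hn0
            rw [Finset.sum_add_distrib, ← Finset.mul_sum]
            exact ih2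
        _ = (n:ℝ)^(K+1) * ‖opAvg F z0‖ ^ 2 := by ring

private lemma opAvg_cocoercive (hn : 1 ≤ n) {ℓ : ℝ} (hℓ : 0 < ℓ)
    (F : Fin n → EuclideanSpace ℝ (Fin d) → EuclideanSpace ℝ (Fin d))
    (hco : ∀ i, Cocoercive ℓ (F i)) : Cocoercive ℓ (opAvg F) := by
  intro u v
  have hn0 : (0:ℝ) < n := by exact_mod_cast Nat.lt_of_lt_of_le Nat.zero_lt_one hn
  have hx : opAvg F u - opAvg F v = (n:ℝ)⁻¹ • ∑ i, (F i u - F i v) := by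
    simp only [opAvg]
    rw [← smul_sub, Finset.sum_sub_distrib]
  have hCS : ‖∑ i, (F i u - F i v)‖ ^ 2 ≤ (n:ℝ) * ∑ i, ‖F i u - F i v‖ ^ 2 := by
    have h1 : ‖∑ i, (F i u - F i v)‖ ≤ ∑ i, ‖F i u - F i v‖ :=
      norm_sum_le _ _
    have h2 : (∑ i, ‖F i u - F i v‖) ^ 2 ≤ (∑ i, ‖F i u - F i v‖ ^ 2) * (n:ℝ) := by
      have h3 := Finset.sum_mul_sq_le_sq_mul_sq Finset.univ
        (fun i => ‖F i u - F i v‖) (fun _ => (1:ℝ))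
      simpa using h3
    calc ‖∑ i, (F i u - F i v)‖ ^ 2 ≤ (∑ i, ‖F i u - F i v‖) ^ 2 :=
          pow_le_pow_left₀ (norm_nonneg _) h1 2
      _ ≤ (∑ i, ‖F i u - F i v‖ ^ 2) * (n:ℝ) := h2
      _ = (n:ℝ) * ∑ i, ‖F i u - F i v‖ ^ 2 := mul_comm _ _
  have hsum_co : ∑ i, ‖F i u - F i v‖ ^ 2
      ≤ ℓ * (inner ℝ (∑ i, (F i u - F i v)) (u - v) : ℝ) := by
    calc ∑ i, ‖F i u - F i v‖ ^ 2 ≤ ∑ i, ℓ * (inner ℝ (F i u - F i v) (u - v) : ℝ) :=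
          Finset.sum_le_sum fun i _ => hco i u v
      _ = ℓ * (inner ℝ (∑ i, (F i u - F i v)) (u - v) : ℝ) := by
          rw [← Finset.mul_sum, ← sum_inner]
  rw [hx, norm_smul, real_inner_smul_left, mul_pow, norm_inv,
    Real.norm_natCast]
  set S := ∑ i, (F i u - F i v)
  set C : ℝ := inner ℝ S (u - v)
  calc ((n:ℝ)⁻¹) ^ 2 * ‖S‖ ^ 2
      ≤ ((n:ℝ)⁻¹) ^ 2 * ((n:ℝ) * (ℓ * C)) := by
        refine mul_le_mul_of_nonneg_left ?_ (by positivity)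
        exact hCS.trans (mul_le_mul_of_nonneg_left hsum_co (le_of_lt hn0))
    _ = ℓ * ((n:ℝ)⁻¹ * C) * ((n:ℝ)⁻¹ * n) := by ring
    _ = ℓ * ((n:ℝ)⁻¹ * C) := by rw [inv_mul_cancel₀ (ne_of_gt hn0), mul_one]

private lemma mu_le_ell (hd : 0 < d) (hn : 1 ≤ n) {ℓ μ : ℝ} (hℓ : 0 < ℓ) (hμ : 0 < μ)
    (F : Fin n → EuclideanSpace ℝ (Fin d) → EuclideanSpace ℝ (Fin d))
    (hco : ∀ i, Cocoercive ℓ (F i)) (hsm : StronglyMonotone μ (opAvg F)) :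
    μ ≤ ℓ := by
  have hcoF := opAvg_cocoercive hn hℓ F hco
  set u : EuclideanSpace ℝ (Fin d) := EuclideanSpace.single ⟨0, hd⟩ (1:ℝ) with hudef
  have hu : ‖u - 0‖ = 1 := by
    rw [sub_zero, hudef, EuclideanSpace.norm_single]; norm_num
  have h1 := hsm u 0
  rw [hu, one_pow, mul_one] at h1
  have h2 := hcoF u 0
  have h3 : (inner ℝ (opAvg F u - opAvg F 0) (u - 0) : ℝ)
      ≤ ‖opAvg F u - opAvg F 0‖ := by
    have h := real_inner_le_norm (opAvg F u - opAvg F 0) (u - 0)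
    rw [hu, mul_one] at h
    exact h
  nlinarith [h1, h2, h3, hμ, norm_nonneg (opAvg F u - opAvg F 0)]

private lemma norm_sq_split {E : Type*} [SeminormedAddCommGroup E] (a b : E) :
    ‖a‖ ^ 2 ≤ 2 * ‖b‖ ^ 2 + 2 * ‖a - b‖ ^ 2 := by
  have h2 : ‖a‖ ≤ ‖a - b‖ + ‖b‖ := by
    simpa using norm_add_le (a - b) b
  nlinarith [norm_nonneg (a - b), norm_nonneg b, norm_nonneg a,
    sq_nonneg (‖a - b‖ - ‖b‖)]

end SarahAux

set_option maxHeartbeats 1000000 in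
/-- **Theorem 1.** If each `F_i` is `ℓ`-cocoercive and the average `F` is `μ`-strongly
monotone, then with stepsize `γ = 2/(9ℓ)` and any number of steps `K ≥ 10ℓ/μ`, the
SARAH inner loop satisfies `𝔼[‖F(z^K)‖²] ≤ (1/2) ‖F(z^0)‖²`, where the expectation is
the uniform average over all `n^K` index sequences. -/
theorem sarah_one_epoch_contraction {d n : ℕ} (hn : 1 ≤ n) (ℓ μ : ℝ) (hℓ : 0 < ℓ)
    (hμ : 0 < μ)
    (F : Fin n → EuclideanSpace ℝ (Fin d) → EuclideanSpace ℝ (Fin d))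
    (hco : ∀ i, Cocoercive ℓ (F i)) (hsm : StronglyMonotone μ (opAvg F))
    (K : ℕ) (hKμ : 10 * ℓ / μ ≤ (K : ℝ)) (z0 : EuclideanSpace ℝ (Fin d)) :
    (∑ j : Fin K → Fin n,
        ‖opAvg F (sarahTraj (2 / (9 * ℓ)) F z0 j K).1‖ ^ 2) / (n : ℝ) ^ K
      ≤ 1 / 2 * ‖opAvg F z0‖ ^ 2 := by
  have hn0 : (0:ℝ) < n := by exact_mod_cast Nat.lt_of_lt_of_le Nat.zero_lt_one hn
  have hnK : (0:ℝ) < (n:ℝ) ^ K := pow_pos hn0 K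
  rcases Nat.eq_zero_or_pos d with hd | hd
  · subst hd
    have h0 : (∑ j : Fin K → Fin n,
        ‖opAvg F (sarahTraj (2 / (9 * ℓ)) F z0 j K).1‖ ^ 2) = 0 := by
      refine Finset.sum_eq_zero fun j _ => ?_
      have hz : ‖opAvg F (sarahTraj (2 / (9 * ℓ)) F z0 j K).1‖ = 0 := by
        simp [EuclideanSpace.norm_eq]
      rw [hz]
      norm_num
    rw [h0, zero_div]
    positivity
  · set γ : ℝ := 2 / (9 * ℓ) with hγdef
    have hγ0 : 0 < γ := by rw [hγdef]; positivity
    have hγℓ : γ * ℓ = 2/9 := by rw [hγdef]; field_simp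
    have hμℓ : μ ≤ ℓ := mu_le_ell hd hn hℓ hμ F hco hsm
    set x : ℝ := 16/9 * (μ * γ) with hxdef
    have hx : x = 32 * μ / (81 * ℓ) := by rw [hxdef, hγdef]; field_simp; ring
    have hx0 : 0 < x := by rw [hxdef]; positivity
    have hxle : x ≤ 32/81 := by
      rw [hx, div_le_div_iff₀ (by positivity) (by norm_num)]
      nlinarith [hμℓ, hℓ]
    have hq : 0 ≤ 1 - x := by linarith
    have hKx : 3 ≤ (K:ℝ) * x := by
      have h1 : (10 * ℓ / μ) * x ≤ (K:ℝ) * x :=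
        mul_le_mul_of_nonneg_right hKμ (le_of_lt hx0)
      have h2 : (10 * ℓ / μ) * x = 320/81 := by
        rw [hx]; field_simp; ring
      linarith
    have hqK : (1 - x)^K ≤ 1/8 := by
      have he1 : (1 - x) ≤ Real.exp (-x) := by
        have := Real.add_one_le_exp (-x); linarith
      have he2 : (1 - x)^K ≤ (Real.exp (-x))^K := pow_le_pow_left₀ hq he1 K
      have he3 : (Real.exp (-x))^K = Real.exp ((K:ℝ) * (-x)) :=
        (Real.exp_nat_mul (-x) K).symm
      have he4 : Real.exp ((K:ℝ) * (-x)) ≤ Real.exp (-3) := by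
        apply Real.exp_le_exp.2; nlinarith [hKx]
      have he5 : Real.exp (-3 : ℝ) ≤ 1/8 := by
        rw [Real.exp_neg]
        have h8 : (8:ℝ) ≤ Real.exp 3 := by
          have h31 : Real.exp 3 = Real.exp 1 ^ 3 := by
            rw [show (3:ℝ) = ((3:ℕ):ℝ) * 1 by norm_num, Real.exp_nat_mul]
          have h2e : (2:ℝ) ≤ Real.exp 1 := by
            nlinarith [Real.exp_one_gt_d9]
          have h23 : (2:ℝ)^3 ≤ Real.exp 1 ^ 3 := pow_le_pow_left₀ (by norm_num) h2e 3
          rw [h31]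
          norm_num at h23 ⊢
          linarith
        calc (Real.exp 3)⁻¹ ≤ (8:ℝ)⁻¹ := inv_anti₀ (by norm_num) h8
          _ = 1/8 := by norm_num
      calc (1 - x)^K ≤ (Real.exp (-x))^K := he2
        _ = Real.exp ((K:ℝ) * (-x)) := he3
        _ ≤ Real.exp (-3) := he4
        _ ≤ 1/8 := he5
    obtain ⟨hA, hD⟩ := sarah_main hℓ hμ F hco hsm hn hγ0 hγℓ
      (by rw [← hxdef]; exact hq) z0 K
    have htraj : ∀ j : Fin K → Fin n,
        sarahTraj γ F z0 j K = sarahRun γ F (z0, opAvg F z0) (List.ofFn j) := by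
      intro j
      rw [sarahTraj, List.take_of_length_le (le_of_eq (List.length_ofFn (f := j)))]
    set A0 : ℝ := ‖opAvg F z0‖ ^ 2 with hA0def
    have hA0 : 0 ≤ A0 := by positivity
    set Sa : ℝ := ∑ j : Fin K → Fin n,
      ‖(sarahRun γ F (z0, opAvg F z0) (List.ofFn j)).2‖ ^ 2 with hSadef
    set Sd : ℝ := ∑ j : Fin K → Fin n,
      ‖opAvg F (sarahRun γ F (z0, opAvg F z0) (List.ofFn j)).1
        - (sarahRun γ F (z0, opAvg F z0) (List.ofFn j)).2‖ ^ 2 with hSddef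
    have hSa0 : 0 ≤ Sa :=
      Finset.sum_nonneg fun j _ => by positivity
    have hSaBound : Sa ≤ 1/8 * ((n:ℝ)^K * A0) := by
      have h5 : Sa ≤ (n:ℝ)^K * ((1 - x)^K * A0) := by
        have := hA
        rw [mul_pow] at this
        calc Sa ≤ (n:ℝ)^K * (1 - 16/9 * (μ * γ))^K * A0 := this
          _ = (n:ℝ)^K * ((1 - x)^K * A0) := by rw [← hxdef]; ring
      have h6 : (1 - x)^K * A0 ≤ 1/8 * A0 :=
        mul_le_mul_of_nonneg_right hqK hA0
      calc Sa ≤ (n:ℝ)^K * ((1 - x)^K * A0) := h5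
        _ ≤ (n:ℝ)^K * (1/8 * A0) := mul_le_mul_of_nonneg_left h6 (le_of_lt hnK)
        _ = 1/8 * ((n:ℝ)^K * A0) := by ring
    have hSg : (∑ j : Fin K → Fin n, ‖opAvg F (sarahTraj γ F z0 j K).1‖ ^ 2)
        ≤ 2 * Sa + 2 * Sd := by
      have hpt : ∀ j : Fin K → Fin n, ‖opAvg F (sarahTraj γ F z0 j K).1‖ ^ 2
          ≤ 2 * ‖(sarahRun γ F (z0, opAvg F z0) (List.ofFn j)).2‖ ^ 2
            + 2 * ‖opAvg F (sarahRun γ F (z0, opAvg F z0) (List.ofFn j)).1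
                - (sarahRun γ F (z0, opAvg F z0) (List.ofFn j)).2‖ ^ 2 := by
        intro j
        rw [htraj j]
        exact norm_sq_split _ _
      calc (∑ j : Fin K → Fin n, ‖opAvg F (sarahTraj γ F z0 j K).1‖ ^ 2)
          ≤ ∑ j : Fin K → Fin n,
              (2 * ‖(sarahRun γ F (z0, opAvg F z0) (List.ofFn j)).2‖ ^ 2
               + 2 * ‖opAvg F (sarahRun γ F (z0, opAvg F z0) (List.ofFn j)).1
                    - (sarahRun γ F (z0, opAvg F z0) (List.ofFn j)).2‖ ^ 2) :=
            Finset.sum_le_sum fun j _ => hpt j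
        _ = 2 * Sa + 2 * Sd := by
            rw [Finset.sum_add_distrib, ← Finset.mul_sum, ← Finset.mul_sum]
    rw [div_le_iff₀ hnK]
    have hfin : 2 * Sa + 2 * Sd ≤ 1/2 * A0 * (n:ℝ)^K := by
      linarith [hD, hSaBound, hSa0]
    linarith [hSg, hfin]

end
end

section
/- Let n ≥ 1 and let F_1, …, F_n : ℝ^d → ℝ^d be operators with average F = (1/n)∑_{i=1}^n F_i. Suppose each F_i is ℓ-cocoercive and F is μ-strongly monotone. Take the stepsize γ = 2/(9ℓ) and any natural number K with K ≥ 10ℓ/μ. Then for every ε > 0 and every number of epochs S ≥ 1 satisfying (1/2)^S · ‖F(z̃⁰)‖² ≤ ε² (equivalently, S ≥ log₂(‖F(z̃⁰)‖²/ε²)), the SARAH outer-loop iterates satisfy 𝔼[‖F(z̃^S)‖²] ≤ ε². -/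
open Finset
open scoped RealInnerProductSpace

noncomputable section

/-- The SARAH outer loop: starting from `z̃`, each epoch runs the inner loop
(restarted with `v^0 = F(z̃)`) along its list of indices and moves to the endpoint. -/
def sarahOuter {d n : ℕ} (γ : ℝ)
    (F : Fin n → EuclideanSpace ℝ (Fin d) → EuclideanSpace ℝ (Fin d)) :
    EuclideanSpace ℝ (Fin d) → List (List (Fin n)) → EuclideanSpace ℝ (Fin d)
  | z, [] => z
  | z, l :: ls => sarahOuter γ F (sarahRun γ F (z, opAvg F z) l).1 ls

variable {d n : ℕ}

private lemma sarah_step_core {ℓ μ : ℝ} (hn : 1 ≤ n) (hℓ : 0 < ℓ) (hμ : 0 < μ)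
    (F : Fin n → EuclideanSpace ℝ (Fin d) → EuclideanSpace ℝ (Fin d))
    (hco : ∀ i, Cocoercive ℓ (F i))
    (hsm : StronglyMonotone μ (opAvg F)) (z v : EuclideanSpace ℝ (Fin d)) :
    (∑ i, ‖(sarahStep (2 / (9 * ℓ)) F i (z, v)).2‖ ^ 2
        ≤ (n : ℝ) * ‖v‖ ^ 2 + (16 / 9) * ((n : ℝ) *
          ⟪opAvg F (z - (2 / (9 * ℓ)) • v) - opAvg F z, v⟫))
    ∧ (∑ i, ‖opAvg F (sarahStep (2 / (9 * ℓ)) F i (z, v)).1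
          - (sarahStep (2 / (9 * ℓ)) F i (z, v)).2‖ ^ 2
        ≤ (n : ℝ) * ‖opAvg F z - v‖ ^ 2 - (2 / 9) * ((n : ℝ) *
          ⟪opAvg F (z - (2 / (9 * ℓ)) • v) - opAvg F z, v⟫))
    ∧ ⟪opAvg F (z - (2 / (9 * ℓ)) • v) - opAvg F z, v⟫
        ≤ -(2 * μ / (9 * ℓ)) * ‖v‖ ^ 2 := by
  have hnR : (0 : ℝ) < n := by exact_mod_cast hn
  set c : ℝ := 2 / (9 * ℓ) with hc
  have hcpos : 0 < c := by rw [hc]; positivity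
  set z' : EuclideanSpace ℝ (Fin d) := z - c • v with hz'
  set g : Fin n → EuclideanSpace ℝ (Fin d) := fun i => F i z' - F i z with hg
  set Gb : EuclideanSpace ℝ (Fin d) := opAvg F z' - opAvg F z with hGb
  set T : ℝ := ⟪Gb, v⟫ with hT
  have hz'z : z' - z = -(c • v) := by rw [hz']; exact sub_sub_cancel_left z (c • v)
  have hsumg : ∑ i, g i = (n : ℝ) • Gb := by
    have h1 : Gb = (n : ℝ)⁻¹ • ∑ i, g i := by
      rw [hGb, hg]
      unfold opAvg
      rw [← smul_sub, ← Finset.sum_sub_distrib]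
    rw [h1, smul_smul, mul_inv_cancel₀ (ne_of_gt hnR), one_smul]
  have hcl : ℓ * c = 2 / 9 := by rw [hc]; field_simp
  have hgv : ∀ i, ‖g i‖ ^ 2 ≤ -(2 / 9) * ⟪g i, v⟫ := by
    intro i
    have h := hco i z' z
    have h2 : ⟪F i z' - F i z, z' - z⟫ = -(c * ⟪F i z' - F i z, v⟫) := by
      rw [hz'z, inner_neg_right, real_inner_smul_right]
    rw [h2] at h
    calc ‖g i‖ ^ 2 ≤ ℓ * -(c * ⟪g i, v⟫) := h
      _ = -(ℓ * c) * ⟪g i, v⟫ := by ring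
      _ = -(2 / 9) * ⟪g i, v⟫ := by rw [hcl]
  have hSg : ∑ i, ⟪g i, v⟫ = (n : ℝ) * T := by
    rw [← sum_inner, hsumg, real_inner_smul_left, hT]
  have hg2 : ∑ i, ‖g i‖ ^ 2 ≤ -(2 / 9) * ((n : ℝ) * T) := by
    calc ∑ i, ‖g i‖ ^ 2 ≤ ∑ i, -(2 / 9) * ⟪g i, v⟫ :=
          Finset.sum_le_sum fun i _ => hgv i
      _ = -(2 / 9) * ∑ i, ⟪g i, v⟫ := by rw [← Finset.mul_sum]
      _ = -(2 / 9) * ((n : ℝ) * T) := by rw [hSg]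
  have hTle : T ≤ -(2 * μ / (9 * ℓ)) * ‖v‖ ^ 2 := by
    have h := hsm z' z
    have h1 : ⟪opAvg F z' - opAvg F z, z' - z⟫ = -(c * T) := by
      rw [← hGb, hz'z, inner_neg_right, real_inner_smul_right, hT]
    have h2 : ‖z' - z‖ ^ 2 = c ^ 2 * ‖v‖ ^ 2 := by
      rw [hz'z, norm_neg, norm_smul, Real.norm_eq_abs, abs_of_pos hcpos, mul_pow]
    rw [h1, h2] at h
    have key : T ≤ -(μ * c) * ‖v‖ ^ 2 := by nlinarith [hcpos, h]
    have : -(μ * c) * ‖v‖ ^ 2 = -(2 * μ / (9 * ℓ)) * ‖v‖ ^ 2 := by rw [hc]; ring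
    linarith [key, this.le, this.ge]
  have hstep2 : ∀ i, (sarahStep c F i (z, v)).2 = g i + v := by
    intro i; simp only [sarahStep, hg, hz']
  have hstep1 : ∀ i, (sarahStep c F i (z, v)).1 = z' := by
    intro i; simp only [sarahStep, hz']
  have ha : ∑ i, ‖(sarahStep c F i (z, v)).2‖ ^ 2 ≤ (n : ℝ) * ‖v‖ ^ 2 + (16 / 9) * ((n : ℝ) * T) := by
    calc ∑ i, ‖(sarahStep c F i (z, v)).2‖ ^ 2
        = ∑ i, (‖g i‖ ^ 2 + 2 * ⟪g i, v⟫ + ‖v‖ ^ 2) := by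
          refine Finset.sum_congr rfl fun i _ => ?_
          rw [hstep2 i, norm_add_sq_real]
      _ = (∑ i, ‖g i‖ ^ 2) + 2 * ((n : ℝ) * T) + (n : ℝ) * ‖v‖ ^ 2 := by
          rw [Finset.sum_add_distrib, Finset.sum_add_distrib, ← Finset.mul_sum, hSg,
            Finset.sum_const, Finset.card_univ, Fintype.card_fin, nsmul_eq_mul]
      _ ≤ (n : ℝ) * ‖v‖ ^ 2 + (16 / 9) * ((n : ℝ) * T) := by linarith [hg2]
  refine ⟨ha, ?_, hTle⟩
  have hzero : ∑ i, (Gb - g i) = (0 : EuclideanSpace ℝ (Fin d)) := by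
    rw [Finset.sum_sub_distrib, hsumg, Finset.sum_const, Finset.card_univ, Fintype.card_fin,
      ← Nat.cast_smul_eq_nsmul ℝ, sub_self]
  have hGg : ∑ i, ‖Gb - g i‖ ^ 2 ≤ -(2 / 9) * ((n : ℝ) * T) := by
    have he1 : ∑ i, ‖Gb - g i‖ ^ 2
        = (n : ℝ) * ‖Gb‖ ^ 2 - 2 * ((n : ℝ) * ‖Gb‖ ^ 2) + ∑ i, ‖g i‖ ^ 2 := by
      calc ∑ i, ‖Gb - g i‖ ^ 2
          = ∑ i, (‖Gb‖ ^ 2 - 2 * ⟪Gb, g i⟫ + ‖g i‖ ^ 2) := by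
            exact Finset.sum_congr rfl fun i _ => norm_sub_sq_real _ _
        _ = (n : ℝ) * ‖Gb‖ ^ 2 - 2 * ⟪Gb, ∑ i, g i⟫ + ∑ i, ‖g i‖ ^ 2 := by
            rw [Finset.sum_add_distrib, Finset.sum_sub_distrib, ← Finset.mul_sum, ← inner_sum,
              Finset.sum_const, Finset.card_univ, Fintype.card_fin, nsmul_eq_mul]
        _ = (n : ℝ) * ‖Gb‖ ^ 2 - 2 * ((n : ℝ) * ‖Gb‖ ^ 2) + ∑ i, ‖g i‖ ^ 2 := by
            rw [hsumg, real_inner_smul_right, real_inner_self_eq_norm_sq]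
    have hGbnn : 0 ≤ (n : ℝ) * ‖Gb‖ ^ 2 := by positivity
    linarith [he1, hg2, hGbnn]
  calc ∑ i, ‖opAvg F (sarahStep c F i (z, v)).1 - (sarahStep c F i (z, v)).2‖ ^ 2
      = ∑ i, ‖(opAvg F z - v) + (Gb - g i)‖ ^ 2 := by
        refine Finset.sum_congr rfl fun i _ => ?_
        rw [hstep1 i, hstep2 i]
        congr 1
        rw [hGb]; abel
    _ = ∑ i, (‖opAvg F z - v‖ ^ 2 + 2 * ⟪opAvg F z - v, Gb - g i⟫ + ‖Gb - g i‖ ^ 2) := by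
        exact Finset.sum_congr rfl fun i _ => norm_add_sq_real _ _
    _ = (n : ℝ) * ‖opAvg F z - v‖ ^ 2 + 2 * ⟪opAvg F z - v, ∑ i, (Gb - g i)⟫
          + ∑ i, ‖Gb - g i‖ ^ 2 := by
        rw [Finset.sum_add_distrib, Finset.sum_add_distrib, ← Finset.mul_sum, ← inner_sum,
          Finset.sum_const, Finset.card_univ, Fintype.card_fin, nsmul_eq_mul]
    _ ≤ (n : ℝ) * ‖opAvg F z - v‖ ^ 2 - (2 / 9) * ((n : ℝ) * T) := by
        rw [hzero, inner_zero_right]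
        linarith [hGg]

/-- The per-step contraction factor. -/
def sarahRho (ℓ μ : ℝ) : ℝ := max 0 (1 - 32 * μ / (81 * ℓ))

lemma sarahRho_nonneg (ℓ μ : ℝ) : 0 ≤ sarahRho ℓ μ := le_max_left _ _

private lemma sarah_step_v {ℓ μ : ℝ} (hn : 1 ≤ n) (hℓ : 0 < ℓ) (hμ : 0 < μ)
    (F : Fin n → EuclideanSpace ℝ (Fin d) → EuclideanSpace ℝ (Fin d))
    (hco : ∀ i, Cocoercive ℓ (F i))
    (hsm : StronglyMonotone μ (opAvg F)) (z v : EuclideanSpace ℝ (Fin d)) :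
    ∑ i, ‖(sarahStep (2 / (9 * ℓ)) F i (z, v)).2‖ ^ 2
      ≤ (n : ℝ) * sarahRho ℓ μ * ‖v‖ ^ 2 := by
  obtain ⟨ha, -, hT⟩ := sarah_step_core hn hℓ hμ F hco hsm z v
  have hnR : (0 : ℝ) ≤ n := Nat.cast_nonneg n
  have h1 : (16 / 9 : ℝ) * ((n : ℝ) * ⟪opAvg F (z - (2 / (9 * ℓ)) • v) - opAvg F z, v⟫)
      ≤ (16 / 9) * ((n : ℝ) * (-(2 * μ / (9 * ℓ)) * ‖v‖ ^ 2)) := by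
    have := mul_le_mul_of_nonneg_left hT hnR
    linarith
  have h2 : (n : ℝ) * ‖v‖ ^ 2 + (16 / 9) * ((n : ℝ) * (-(2 * μ / (9 * ℓ)) * ‖v‖ ^ 2))
      = (n : ℝ) * (1 - 32 * μ / (81 * ℓ)) * ‖v‖ ^ 2 := by
    field_simp
    ring
  have h3 : (n : ℝ) * (1 - 32 * μ / (81 * ℓ)) * ‖v‖ ^ 2
      ≤ (n : ℝ) * sarahRho ℓ μ * ‖v‖ ^ 2 := by
    have : (n : ℝ) * (1 - 32 * μ / (81 * ℓ)) ≤ (n : ℝ) * sarahRho ℓ μ :=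
      mul_le_mul_of_nonneg_left (le_max_right _ _) hnR
    exact mul_le_mul_of_nonneg_right this (sq_nonneg _)
  linarith

private lemma sarah_step_lyap {ℓ μ : ℝ} (hn : 1 ≤ n) (hℓ : 0 < ℓ) (hμ : 0 < μ)
    (F : Fin n → EuclideanSpace ℝ (Fin d) → EuclideanSpace ℝ (Fin d))
    (hco : ∀ i, Cocoercive ℓ (F i))
    (hsm : StronglyMonotone μ (opAvg F)) (z v : EuclideanSpace ℝ (Fin d)) :
    ∑ i, (‖opAvg F (sarahStep (2 / (9 * ℓ)) F i (z, v)).1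
            - (sarahStep (2 / (9 * ℓ)) F i (z, v)).2‖ ^ 2
          + (1 / 8) * ‖(sarahStep (2 / (9 * ℓ)) F i (z, v)).2‖ ^ 2)
      ≤ (n : ℝ) * (‖opAvg F z - v‖ ^ 2 + (1 / 8) * ‖v‖ ^ 2) := by
  obtain ⟨ha, hb, -⟩ := sarah_step_core hn hℓ hμ F hco hsm z v
  rw [Finset.sum_add_distrib, ← Finset.mul_sum]
  nlinarith [ha, hb]

private lemma sum_pi_succ_aux {k : ℕ} {α : Type*} [Fintype α] [DecidableEq α]
    (f : (Fin (k + 1) → α) → ℝ) :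
    ∑ j, f j = ∑ i : α, ∑ j : Fin k → α, f (Fin.cons i j) := by
  rw [← (Fin.consEquiv fun _ : Fin (k + 1) => α).sum_comp f, Fintype.sum_prod_type]
  simp [Fin.consEquiv]

private lemma ofFn_cons {k : ℕ} {α : Type*} (i : α) (j : Fin k → α) :
    List.ofFn (Fin.cons i j) = i :: List.ofFn j := by
  rw [List.ofFn_succ]; simp

private lemma sarah_run_v {ℓ μ : ℝ} (hn : 1 ≤ n) (hℓ : 0 < ℓ) (hμ : 0 < μ)
    (F : Fin n → EuclideanSpace ℝ (Fin d) → EuclideanSpace ℝ (Fin d))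
    (hco : ∀ i, Cocoercive ℓ (F i))
    (hsm : StronglyMonotone μ (opAvg F)) :
    ∀ (k : ℕ) (z v : EuclideanSpace ℝ (Fin d)),
      ∑ j : Fin k → Fin n, ‖(sarahRun (2 / (9 * ℓ)) F (z, v) (List.ofFn j)).2‖ ^ 2
        ≤ ((n : ℝ) * sarahRho ℓ μ) ^ k * ‖v‖ ^ 2 := by
  intro k
  induction k with
  | zero =>
    intro z v
    simp [sarahRun]
  | succ k ih =>
    intro z v
    have hnn : (0 : ℝ) ≤ ((n : ℝ) * sarahRho ℓ μ) ^ k :=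
      pow_nonneg (mul_nonneg (Nat.cast_nonneg n) (sarahRho_nonneg ℓ μ)) k
    rw [sum_pi_succ_aux]
    calc ∑ i : Fin n, ∑ j : Fin k → Fin n,
          ‖(sarahRun (2 / (9 * ℓ)) F (z, v) (List.ofFn (Fin.cons i j))).2‖ ^ 2
        = ∑ i : Fin n, ∑ j : Fin k → Fin n,
            ‖(sarahRun (2 / (9 * ℓ)) F (sarahStep (2 / (9 * ℓ)) F i (z, v)) (List.ofFn j)).2‖ ^ 2 := by
          refine Finset.sum_congr rfl fun i _ => Finset.sum_congr rfl fun j _ => ?_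
          rw [ofFn_cons]
          rfl
      _ ≤ ∑ i : Fin n, ((n : ℝ) * sarahRho ℓ μ) ^ k * ‖(sarahStep (2 / (9 * ℓ)) F i (z, v)).2‖ ^ 2 := by
          refine Finset.sum_le_sum fun i _ => ?_
          have h := ih (sarahStep (2 / (9 * ℓ)) F i (z, v)).1 (sarahStep (2 / (9 * ℓ)) F i (z, v)).2
          simpa using h
      _ = ((n : ℝ) * sarahRho ℓ μ) ^ k * ∑ i, ‖(sarahStep (2 / (9 * ℓ)) F i (z, v)).2‖ ^ 2 := by
          rw [← Finset.mul_sum]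
      _ ≤ ((n : ℝ) * sarahRho ℓ μ) ^ k * ((n : ℝ) * sarahRho ℓ μ * ‖v‖ ^ 2) :=
          mul_le_mul_of_nonneg_left (sarah_step_v hn hℓ hμ F hco hsm z v) hnn
      _ = ((n : ℝ) * sarahRho ℓ μ) ^ (k + 1) * ‖v‖ ^ 2 := by ring

private lemma sarah_run_lyap {ℓ μ : ℝ} (hn : 1 ≤ n) (hℓ : 0 < ℓ) (hμ : 0 < μ)
    (F : Fin n → EuclideanSpace ℝ (Fin d) → EuclideanSpace ℝ (Fin d))
    (hco : ∀ i, Cocoercive ℓ (F i))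
    (hsm : StronglyMonotone μ (opAvg F)) :
    ∀ (k : ℕ) (z v : EuclideanSpace ℝ (Fin d)),
      ∑ j : Fin k → Fin n,
          (‖opAvg F (sarahRun (2 / (9 * ℓ)) F (z, v) (List.ofFn j)).1
              - (sarahRun (2 / (9 * ℓ)) F (z, v) (List.ofFn j)).2‖ ^ 2
            + (1 / 8) * ‖(sarahRun (2 / (9 * ℓ)) F (z, v) (List.ofFn j)).2‖ ^ 2)
        ≤ (n : ℝ) ^ k * (‖opAvg F z - v‖ ^ 2 + (1 / 8) * ‖v‖ ^ 2) := by
  intro k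
  induction k with
  | zero =>
    intro z v
    simp [sarahRun]
  | succ k ih =>
    intro z v
    have hnn : (0 : ℝ) ≤ (n : ℝ) ^ k := pow_nonneg (Nat.cast_nonneg n) k
    rw [sum_pi_succ_aux]
    calc ∑ i : Fin n, ∑ j : Fin k → Fin n,
          (‖opAvg F (sarahRun (2 / (9 * ℓ)) F (z, v) (List.ofFn (Fin.cons i j))).1
              - (sarahRun (2 / (9 * ℓ)) F (z, v) (List.ofFn (Fin.cons i j))).2‖ ^ 2
            + (1 / 8) * ‖(sarahRun (2 / (9 * ℓ)) F (z, v) (List.ofFn (Fin.cons i j))).2‖ ^ 2)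
        = ∑ i : Fin n, ∑ j : Fin k → Fin n,
            (‖opAvg F (sarahRun (2 / (9 * ℓ)) F (sarahStep (2 / (9 * ℓ)) F i (z, v)) (List.ofFn j)).1
                - (sarahRun (2 / (9 * ℓ)) F (sarahStep (2 / (9 * ℓ)) F i (z, v)) (List.ofFn j)).2‖ ^ 2
              + (1 / 8) * ‖(sarahRun (2 / (9 * ℓ)) F (sarahStep (2 / (9 * ℓ)) F i (z, v)) (List.ofFn j)).2‖ ^ 2) := by
          refine Finset.sum_congr rfl fun i _ => Finset.sum_congr rfl fun j _ => ?_
          rw [ofFn_cons]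
          rfl
      _ ≤ ∑ i : Fin n, (n : ℝ) ^ k *
            (‖opAvg F (sarahStep (2 / (9 * ℓ)) F i (z, v)).1
                - (sarahStep (2 / (9 * ℓ)) F i (z, v)).2‖ ^ 2
              + (1 / 8) * ‖(sarahStep (2 / (9 * ℓ)) F i (z, v)).2‖ ^ 2) := by
          refine Finset.sum_le_sum fun i _ => ?_
          have h := ih (sarahStep (2 / (9 * ℓ)) F i (z, v)).1 (sarahStep (2 / (9 * ℓ)) F i (z, v)).2
          simpa using h
      _ = (n : ℝ) ^ k * ∑ i, (‖opAvg F (sarahStep (2 / (9 * ℓ)) F i (z, v)).1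
                - (sarahStep (2 / (9 * ℓ)) F i (z, v)).2‖ ^ 2
              + (1 / 8) * ‖(sarahStep (2 / (9 * ℓ)) F i (z, v)).2‖ ^ 2) := by
          rw [← Finset.mul_sum]
      _ ≤ (n : ℝ) ^ k * ((n : ℝ) * (‖opAvg F z - v‖ ^ 2 + (1 / 8) * ‖v‖ ^ 2)) :=
          mul_le_mul_of_nonneg_left (sarah_step_lyap hn hℓ hμ F hco hsm z v) hnn
      _ = (n : ℝ) ^ (k + 1) * (‖opAvg F z - v‖ ^ 2 + (1 / 8) * ‖v‖ ^ 2) := by ring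

private lemma norm_sq_le_two_aux (a b : EuclideanSpace ℝ (Fin d)) :
    ‖a‖ ^ 2 ≤ 2 * ‖a - b‖ ^ 2 + 2 * ‖b‖ ^ 2 := by
  have h1 : ‖a‖ ^ 2 = ‖(a - b) + b‖ ^ 2 := by rw [sub_add_cancel]
  rw [h1, norm_add_sq_real]
  have h2 : (0 : ℝ) ≤ ‖(a - b) - b‖ ^ 2 := sq_nonneg _
  rw [norm_sub_sq_real] at h2
  linarith

private lemma sarah_inner {ℓ μ : ℝ} (hn : 1 ≤ n) (hℓ : 0 < ℓ) (hμ : 0 < μ)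
    (F : Fin n → EuclideanSpace ℝ (Fin d) → EuclideanSpace ℝ (Fin d))
    (hco : ∀ i, Cocoercive ℓ (F i))
    (hsm : StronglyMonotone μ (opAvg F)) (K : ℕ) (hK : sarahRho ℓ μ ^ K ≤ 1 / 8)
    (z : EuclideanSpace ℝ (Fin d)) :
    ∑ j : Fin K → Fin n,
        ‖opAvg F (sarahRun (2 / (9 * ℓ)) F (z, opAvg F z) (List.ofFn j)).1‖ ^ 2
      ≤ 1 / 2 * ((n : ℝ) ^ K * ‖opAvg F z‖ ^ 2) := by
  have hA := sarah_run_v hn hℓ hμ F hco hsm K z (opAvg F z)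
  have hB := sarah_run_lyap hn hℓ hμ F hco hsm K z (opAvg F z)
  rw [sub_self, norm_zero] at hB
  have hpt : ∀ j : Fin K → Fin n,
      ‖opAvg F (sarahRun (2 / (9 * ℓ)) F (z, opAvg F z) (List.ofFn j)).1‖ ^ 2
        ≤ 2 * (‖opAvg F (sarahRun (2 / (9 * ℓ)) F (z, opAvg F z) (List.ofFn j)).1
              - (sarahRun (2 / (9 * ℓ)) F (z, opAvg F z) (List.ofFn j)).2‖ ^ 2
            + (1 / 8) * ‖(sarahRun (2 / (9 * ℓ)) F (z, opAvg F z) (List.ofFn j)).2‖ ^ 2)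
          + (7 / 4) * ‖(sarahRun (2 / (9 * ℓ)) F (z, opAvg F z) (List.ofFn j)).2‖ ^ 2 := by
    intro j
    have := norm_sq_le_two_aux
      (opAvg F (sarahRun (2 / (9 * ℓ)) F (z, opAvg F z) (List.ofFn j)).1)
      ((sarahRun (2 / (9 * ℓ)) F (z, opAvg F z) (List.ofFn j)).2)
    linarith
  have hsum : ∑ j : Fin K → Fin n,
      ‖opAvg F (sarahRun (2 / (9 * ℓ)) F (z, opAvg F z) (List.ofFn j)).1‖ ^ 2
      ≤ 2 * ((n : ℝ) ^ K * ((0:ℝ) ^ 2 + (1 / 8) * ‖opAvg F z‖ ^ 2))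
        + (7 / 4) * (((n : ℝ) * sarahRho ℓ μ) ^ K * ‖opAvg F z‖ ^ 2) := by
    calc ∑ j : Fin K → Fin n,
        ‖opAvg F (sarahRun (2 / (9 * ℓ)) F (z, opAvg F z) (List.ofFn j)).1‖ ^ 2
        ≤ ∑ j : Fin K → Fin n,
          (2 * (‖opAvg F (sarahRun (2 / (9 * ℓ)) F (z, opAvg F z) (List.ofFn j)).1
              - (sarahRun (2 / (9 * ℓ)) F (z, opAvg F z) (List.ofFn j)).2‖ ^ 2
            + (1 / 8) * ‖(sarahRun (2 / (9 * ℓ)) F (z, opAvg F z) (List.ofFn j)).2‖ ^ 2)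
          + (7 / 4) * ‖(sarahRun (2 / (9 * ℓ)) F (z, opAvg F z) (List.ofFn j)).2‖ ^ 2) :=
          Finset.sum_le_sum fun j _ => hpt j
      _ = 2 * (∑ j : Fin K → Fin n,
            (‖opAvg F (sarahRun (2 / (9 * ℓ)) F (z, opAvg F z) (List.ofFn j)).1
              - (sarahRun (2 / (9 * ℓ)) F (z, opAvg F z) (List.ofFn j)).2‖ ^ 2
            + (1 / 8) * ‖(sarahRun (2 / (9 * ℓ)) F (z, opAvg F z) (List.ofFn j)).2‖ ^ 2))
          + (7 / 4) * ∑ j : Fin K → Fin n,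
            ‖(sarahRun (2 / (9 * ℓ)) F (z, opAvg F z) (List.ofFn j)).2‖ ^ 2 := by
          rw [Finset.sum_add_distrib, ← Finset.mul_sum, ← Finset.mul_sum]
      _ ≤ _ := by
          have h2 := mul_le_mul_of_nonneg_left hB (by norm_num : (0:ℝ) ≤ 2)
          have h3 := mul_le_mul_of_nonneg_left hA (by norm_num : (0:ℝ) ≤ 7/4)
          linarith
  have hmp : ((n : ℝ) * sarahRho ℓ μ) ^ K = (n : ℝ) ^ K * sarahRho ℓ μ ^ K := mul_pow _ _ _
  have hnK : (0 : ℝ) ≤ (n : ℝ) ^ K := pow_nonneg (Nat.cast_nonneg n) K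
  have hv : (0 : ℝ) ≤ ‖opAvg F z‖ ^ 2 := sq_nonneg _
  rw [hmp] at hsum
  have h8 : (n : ℝ) ^ K * sarahRho ℓ μ ^ K * ‖opAvg F z‖ ^ 2
      ≤ (n : ℝ) ^ K * (1 / 8) * ‖opAvg F z‖ ^ 2 := by
    have := mul_le_mul_of_nonneg_left hK hnK
    exact mul_le_mul_of_nonneg_right (by linarith) hv
  nlinarith [hsum, h8, mul_nonneg hnK hv]

private lemma sarahRho_pow_le {ℓ μ : ℝ} (hℓ : 0 < ℓ) (hμ : 0 < μ) (K : ℕ)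
    (hKμ : 10 * ℓ / μ ≤ (K : ℝ)) : sarahRho ℓ μ ^ K ≤ 1 / 8 := by
  set x : ℝ := 32 * μ / (81 * ℓ) with hx
  have hxpos : 0 < x := by rw [hx]; positivity
  have hKpos : (0 : ℝ) < K := lt_of_lt_of_le (by positivity) hKμ
  rcases le_or_gt 1 x with h | h
  · have hρ : sarahRho ℓ μ = 0 := by
      rw [sarahRho, ← hx, max_eq_left (by linarith)]
    rw [hρ, zero_pow (by exact_mod_cast hKpos.ne' : K ≠ 0)]
    norm_num
  · have hρ : sarahRho ℓ μ = 1 - x := by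
      rw [sarahRho, ← hx, max_eq_right (by linarith)]
    rw [hρ]
    have h0 : (0 : ℝ) ≤ 1 - x := by linarith
    have h1 : 1 - x ≤ Real.exp (-x) := by linarith [Real.add_one_le_exp (-x)]
    have h2 : (1 - x) ^ K ≤ Real.exp (-x) ^ K := pow_le_pow_left₀ h0 h1 K
    have h3 : Real.exp (-x) ^ K = Real.exp ((K : ℝ) * -x) := (Real.exp_nat_mul (-x) K).symm
    have hKx : (3 : ℝ) ≤ (K : ℝ) * x := by
      have hc : (10 * ℓ / μ) * x = 320 / 81 := by
        rw [hx]; field_simp; ring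
      have := mul_le_mul_of_nonneg_right hKμ hxpos.le
      rw [hc] at this
      linarith
    have h4 : Real.exp ((K : ℝ) * -x) ≤ Real.exp (-3) := by
      apply Real.exp_le_exp.2
      linarith
    have h5 : Real.exp (-3 : ℝ) ≤ 1 / 8 := by
      rw [Real.exp_neg]
      have e1 : (2 : ℝ) ≤ Real.exp 1 := by linarith [Real.add_one_le_exp (1 : ℝ)]
      have e3 : (8 : ℝ) ≤ Real.exp 3 := by
        have : Real.exp (3 : ℝ) = Real.exp 1 ^ (3 : ℕ) := by
          rw [← Real.exp_nat_mul]; norm_num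
        rw [this]
        calc (8 : ℝ) = 2 ^ (3 : ℕ) := by norm_num
          _ ≤ Real.exp 1 ^ (3 : ℕ) := pow_le_pow_left₀ (by norm_num) e1 3
      rw [one_div]
      exact inv_anti₀ (by norm_num) e3
    linarith [h2, h3.le, h3.ge, h4]

private lemma sarah_outer_bound {ℓ μ : ℝ} (hn : 1 ≤ n) (hℓ : 0 < ℓ) (hμ : 0 < μ)
    (F : Fin n → EuclideanSpace ℝ (Fin d) → EuclideanSpace ℝ (Fin d))
    (hco : ∀ i, Cocoercive ℓ (F i))
    (hsm : StronglyMonotone μ (opAvg F)) (K : ℕ) (hK : sarahRho ℓ μ ^ K ≤ 1 / 8) :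
    ∀ (S : ℕ) (z : EuclideanSpace ℝ (Fin d)),
      ∑ jj : Fin S → Fin K → Fin n,
          ‖opAvg F (sarahOuter (2 / (9 * ℓ)) F z (List.ofFn fun s => List.ofFn (jj s)))‖ ^ 2
        ≤ (1 / 2 : ℝ) ^ S * (n : ℝ) ^ (S * K) * ‖opAvg F z‖ ^ 2 := by
  intro S
  induction S with
  | zero =>
    intro z
    simp [sarahOuter]
  | succ S ih =>
    intro z
    rw [sum_pi_succ_aux]
    have hlist : ∀ (l0 : Fin K → Fin n) (jj : Fin S → Fin K → Fin n),
        (List.ofFn fun s : Fin (S + 1) => List.ofFn ((Fin.cons l0 jj : Fin (S + 1) → Fin K → Fin n) s))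
          = List.ofFn l0 :: List.ofFn fun s => List.ofFn (jj s) := by
      intro l0 jj
      rw [List.ofFn_succ]
      simp
    have houter : ∀ (l0 : Fin K → Fin n) (jj : Fin S → Fin K → Fin n),
        sarahOuter (2 / (9 * ℓ)) F z
            (List.ofFn fun s : Fin (S + 1) => List.ofFn ((Fin.cons l0 jj : Fin (S + 1) → Fin K → Fin n) s))
          = sarahOuter (2 / (9 * ℓ)) F
              (sarahRun (2 / (9 * ℓ)) F (z, opAvg F z) (List.ofFn l0)).1
              (List.ofFn fun s => List.ofFn (jj s)) := by
      intro l0 jj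
      rw [hlist l0 jj]
      rfl
    calc ∑ l0 : Fin K → Fin n, ∑ jj : Fin S → Fin K → Fin n,
          ‖opAvg F (sarahOuter (2 / (9 * ℓ)) F z
              (List.ofFn fun s : Fin (S + 1) => List.ofFn ((Fin.cons l0 jj : Fin (S + 1) → Fin K → Fin n) s)))‖ ^ 2
        ≤ ∑ l0 : Fin K → Fin n, (1 / 2 : ℝ) ^ S * (n : ℝ) ^ (S * K) *
            ‖opAvg F (sarahRun (2 / (9 * ℓ)) F (z, opAvg F z) (List.ofFn l0)).1‖ ^ 2 := by
          refine Finset.sum_le_sum fun l0 _ => ?_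
          have h := ih (sarahRun (2 / (9 * ℓ)) F (z, opAvg F z) (List.ofFn l0)).1
          calc ∑ jj : Fin S → Fin K → Fin n,
              ‖opAvg F (sarahOuter (2 / (9 * ℓ)) F z
                  (List.ofFn fun s : Fin (S + 1) => List.ofFn ((Fin.cons l0 jj : Fin (S + 1) → Fin K → Fin n) s)))‖ ^ 2
              = ∑ jj : Fin S → Fin K → Fin n,
                ‖opAvg F (sarahOuter (2 / (9 * ℓ)) F
                    (sarahRun (2 / (9 * ℓ)) F (z, opAvg F z) (List.ofFn l0)).1
                    (List.ofFn fun s => List.ofFn (jj s)))‖ ^ 2 := by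
                exact Finset.sum_congr rfl fun jj _ => by rw [houter l0 jj]
            _ ≤ _ := h
      _ = (1 / 2 : ℝ) ^ S * (n : ℝ) ^ (S * K) *
            ∑ l0 : Fin K → Fin n,
              ‖opAvg F (sarahRun (2 / (9 * ℓ)) F (z, opAvg F z) (List.ofFn l0)).1‖ ^ 2 := by
          rw [← Finset.mul_sum]
      _ ≤ (1 / 2 : ℝ) ^ S * (n : ℝ) ^ (S * K) *
            (1 / 2 * ((n : ℝ) ^ K * ‖opAvg F z‖ ^ 2)) := by
          refine mul_le_mul_of_nonneg_left
            (sarah_inner hn hℓ hμ F hco hsm K hK z) ?_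
          positivity
      _ = (1 / 2 : ℝ) ^ (S + 1) * (n : ℝ) ^ ((S + 1) * K) * ‖opAvg F z‖ ^ 2 := by
          rw [pow_succ, show (S + 1) * K = S * K + K from by ring, pow_add]
          ring

/-- **Corollary (ε-solution).** If each `F_i` is `ℓ`-cocoercive and the average `F` is
`μ`-strongly monotone, then with stepsize `γ = 2/(9ℓ)`, any number of inner steps
`K ≥ 10ℓ/μ`, and any number of epochs `S ≥ 1` with `(1/2)^S ‖F(z̃^0)‖² ≤ ε²`, the SARAH
outer iterates satisfy `𝔼[‖F(z̃^S)‖²] ≤ ε²`, where the expectation is the uniform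
average over all `n^{SK}` tuples of index sequences `(i^1, …, i^S)`. -/
theorem sarah_eps_solution {d n : ℕ} (hn : 1 ≤ n) (ℓ μ : ℝ) (hℓ : 0 < ℓ)
    (hμ : 0 < μ)
    (F : Fin n → EuclideanSpace ℝ (Fin d) → EuclideanSpace ℝ (Fin d))
    (hco : ∀ i, Cocoercive ℓ (F i)) (hsm : StronglyMonotone μ (opAvg F))
    (K : ℕ) (hKμ : 10 * ℓ / μ ≤ (K : ℝ)) (S : ℕ) (hS : 1 ≤ S)
    (z0 : EuclideanSpace ℝ (Fin d)) (ε : ℝ) (hε : 0 < ε)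
    (hSε : (1 / 2) ^ S * ‖opAvg F z0‖ ^ 2 ≤ ε ^ 2) :
    (∑ jj : Fin S → Fin K → Fin n,
        ‖opAvg F (sarahOuter (2 / (9 * ℓ)) F z0
            (List.ofFn fun s => List.ofFn (jj s)))‖ ^ 2) / (n : ℝ) ^ (S * K)
      ≤ ε ^ 2 := by
  have hK8 : sarahRho ℓ μ ^ K ≤ 1 / 8 := sarahRho_pow_le hℓ hμ K hKμ
  have hb := sarah_outer_bound hn hℓ hμ F hco hsm K hK8 S z0
  have hnR : (0 : ℝ) < n := by exact_mod_cast hn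
  have hpow : (0 : ℝ) < (n : ℝ) ^ (S * K) := pow_pos hnR _
  rw [div_le_iff₀ hpow]
  calc ∑ jj : Fin S → Fin K → Fin n,
      ‖opAvg F (sarahOuter (2 / (9 * ℓ)) F z0
          (List.ofFn fun s => List.ofFn (jj s)))‖ ^ 2
      ≤ (1 / 2 : ℝ) ^ S * (n : ℝ) ^ (S * K) * ‖opAvg F z0‖ ^ 2 := hb
    _ = ((1 / 2 : ℝ) ^ S * ‖opAvg F z0‖ ^ 2) * (n : ℝ) ^ (S * K) := by ring
    _ ≤ ε ^ 2 * (n : ℝ) ^ (S * K) := mul_le_mul_of_nonneg_right hSε hpow.le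

end
end
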